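/- For nonnegative integers d_1, ..., d_m and formal variables x, q, the following identity of rational functions (q-series) holds: (x^2; q^2)_{d_1 + ... + d_m} / ((q^2;q^2)_{d_1} ... (q^2;q^2)_{d_m}) = \sum over all decompositions alpha_i + beta_i = d_i (for i = 1,...,m) of (-x^2 q^{-1})^{alpha_1 + ... + alpha_m} * q^{alpha_1^2 + ... + alpha_m^2 + 2 * \sum_{i=1}^{m-1} alpha_{i+1} (d_1 + ... + d_i)} / ((q^2;q^2)_{alpha_1} ... (q^2;q^2)_{alpha_m} (q^2;q^2)_{beta_1} ... (q^2;q^2)_{beta_m}). -/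

import Mathlib

open Finset

/-- The Pochhammer symbol `(x; q)_n = ∏_{j=0}^{n-1} (1 - x q^j)`. -/
noncomputable def qPoch {K : Type*} [Field K] (x q : K) (n : ℕ) : K :=
  ∏ j ∈ Finset.range n, (1 - x * q ^ j)

section aux
variable {K : Type*} [Field K] (q : K)

lemma qPoch_succ (x : K) (n : ℕ) : qPoch x q (n+1) = qPoch x q n * (1 - x * q ^ n) := by
  simp [qPoch, Finset.prod_range_succ]

lemma qPoch_add (x : K) (a b : ℕ) :
    qPoch x q (a + b) = qPoch x q a * qPoch (x * q ^ a) q b := by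
  simp only [qPoch, Finset.prod_range_add]
  congr 1
  refine Finset.prod_congr rfl fun j _ => ?_
  rw [pow_add]; ring

lemma one_sub_ne (hpoch : ∀ n : ℕ, qPoch (q ^ 2) (q ^ 2) n ≠ 0) (t : ℕ) :
    (1 - q ^ 2 * (q ^ 2) ^ t) ≠ 0 := by
  have := hpoch (t + 1)
  rw [qPoch_succ] at this
  exact (mul_ne_zero_iff.mp this).2

/-- pure q-Pascal for ratios of Pochhammers. -/
lemma pascal0 (hpoch : ∀ n : ℕ, qPoch (q ^ 2) (q ^ 2) n ≠ 0) (j t : ℕ) :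
    qPoch (q^2) (q^2) (j+t+2) / (qPoch (q^2) (q^2) (j+1) * qPoch (q^2) (q^2) (t+1))
      = qPoch (q^2) (q^2) (j+t+1) / (qPoch (q^2) (q^2) (j+1) * qPoch (q^2) (q^2) t)
        + (q^2)^(t+1) * (qPoch (q^2) (q^2) (j+t+1) / (qPoch (q^2) (q^2) j * qPoch (q^2) (q^2) (t+1))) := by
  have hj := hpoch j
  have ht := hpoch t
  have hj1 := one_sub_ne q hpoch j
  have ht1 := one_sub_ne q hpoch t
  rw [show j+t+2 = (j+t+1)+1 from rfl, qPoch_succ, qPoch_succ (q^2) (q^2) j,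
    qPoch_succ (q^2) (q^2) t]
  field_simp
  ring

end aux

section aux2
variable {K : Type*} [Field K] (q : K)

/-- q-binomial theorem (Gauss), multiplied form. -/
lemma qbin (hq : q ≠ 0) (hpoch : ∀ n : ℕ, qPoch (q ^ 2) (q ^ 2) n ≠ 0) (y : K) (n : ℕ) :
    qPoch y (q^2) n = ∑ α ∈ Finset.range (n+1),
      (-y * q⁻¹) ^ α * q ^ (α^2) *
        (qPoch (q^2) (q^2) n / (qPoch (q^2) (q^2) α * qPoch (q^2) (q^2) (n - α))) := by
  induction n with
  | zero => simp [qPoch]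
  | succ n ih =>
    rw [qPoch_succ, ih]
    rw [Finset.sum_range_succ
      (fun α => (-y * q⁻¹) ^ α * q ^ (α^2) *
        (qPoch (q^2) (q^2) (n+1) / (qPoch (q^2) (q^2) α * qPoch (q^2) (q^2) (n + 1 - α)))) (n+1)]
    rw [Finset.sum_range_succ'
      (fun α => (-y * q⁻¹) ^ α * q ^ (α^2) *
        (qPoch (q^2) (q^2) (n+1) / (qPoch (q^2) (q^2) α * qPoch (q^2) (q^2) (n + 1 - α)))) n]
    have key : ∀ α ∈ Finset.range n,
        (-y * q⁻¹) ^ (α+1) * q ^ ((α+1)^2) *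
          (qPoch (q^2) (q^2) (n+1) / (qPoch (q^2) (q^2) (α+1) * qPoch (q^2) (q^2) (n + 1 - (α+1))))
        = (-y * q⁻¹) ^ (α+1) * q ^ ((α+1)^2) *
            (qPoch (q^2) (q^2) n / (qPoch (q^2) (q^2) (α+1) * qPoch (q^2) (q^2) (n - (α+1))))
          + (-y * (q^2)^n) *
            ((-y * q⁻¹) ^ α * q ^ (α^2) *
              (qPoch (q^2) (q^2) n / (qPoch (q^2) (q^2) α * qPoch (q^2) (q^2) (n - α)))) := by
      intro α hα
      rw [Finset.mem_range] at hα
      obtain ⟨t, ht⟩ : ∃ t, n = α + t + 1 := ⟨n - α - 1, by omega⟩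
      subst ht
      have hcoef : (-y * q⁻¹) ^ (α+1) * q ^ ((α+1)^2) * (q^2)^(t+1)
          = (-y * (q^2)^(α+t+1)) * ((-y * q⁻¹) ^ α * q ^ (α^2)) := by
        field_simp
        linear_combination (-(y*y^α*q^2*q^(α*2)*q^α^2*q^(t*2)*q⁻¹^α*(-1)^α)) * mul_inv_cancel₀ hq
      have hz : ∀ z : K, (-y * q⁻¹) ^ (α+1) * q ^ ((α+1)^2) * ((q^2)^(t+1) * z)
          = (-y * (q^2)^(α+t+1)) * ((-y * q⁻¹) ^ α * q ^ (α^2) * z) := by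
        intro z
        calc (-y * q⁻¹) ^ (α+1) * q ^ ((α+1)^2) * ((q^2)^(t+1) * z)
            = ((-y * q⁻¹) ^ (α+1) * q ^ ((α+1)^2) * (q^2)^(t+1)) * z := by ring
          _ = _ := by rw [hcoef]; ring
      rw [show α + t + 1 + 1 = α + t + 2 from rfl,
        show α + t + 2 - (α+1) = t + 1 by omega,
        show α + t + 1 - (α+1) = t by omega,
        show α + t + 1 - α = t + 1 by omega,
        pascal0 q hpoch α t, mul_add, hz]
    rw [Finset.sum_congr rfl key, Finset.sum_add_distrib]
    have hlast : (-y * q⁻¹) ^ (n+1) * q ^ ((n+1)^2) *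
          (qPoch (q^2) (q^2) (n+1) / (qPoch (q^2) (q^2) (n+1) * qPoch (q^2) (q^2) (n + 1 - (n+1))))
        = (-y * (q^2)^n) * ((-y * q⁻¹) ^ n * q ^ (n^2) *
            (qPoch (q^2) (q^2) n / (qPoch (q^2) (q^2) n * qPoch (q^2) (q^2) (n - n)))) := by
      rw [Nat.sub_self, Nat.sub_self]
      have h0 : qPoch (q^2) (q^2) 0 = 1 := by simp [qPoch]
      rw [h0, mul_one, mul_one, div_self (hpoch (n+1)), div_self (hpoch n)]
      field_simp
      linear_combination (-(y*y^n*q^(n*2)*q^n^2*q⁻¹^n*(-1)^n)) * mul_inv_cancel₀ hq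
    have hzero : (-y * q⁻¹) ^ 0 * q ^ (0^2) *
          (qPoch (q^2) (q^2) (n+1) / (qPoch (q^2) (q^2) 0 * qPoch (q^2) (q^2) (n + 1 - 0)))
        = (-y * q⁻¹) ^ 0 * q ^ (0^2) *
          (qPoch (q^2) (q^2) n / (qPoch (q^2) (q^2) 0 * qPoch (q^2) (q^2) (n - 0))) := by
      have h0 : qPoch (q^2) (q^2) 0 = 1 := by simp [qPoch]
      simp only [Nat.sub_zero, h0, one_mul]
      rw [div_self (hpoch (n+1)), div_self (hpoch n)]
    rw [hlast, hzero, ← Finset.mul_sum]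
    have h1 := Finset.sum_range_succ' (fun α => (-y * q⁻¹) ^ α * q ^ (α^2) *
        (qPoch (q^2) (q^2) n / (qPoch (q^2) (q^2) α * qPoch (q^2) (q^2) (n - α)))) n
    have h2 := Finset.sum_range_succ (fun α => (-y * q⁻¹) ^ α * q ^ (α^2) *
        (qPoch (q^2) (q^2) n / (qPoch (q^2) (q^2) α * qPoch (q^2) (q^2) (n - α)))) n
    linear_combination h1 - (y * (q^2)^n) * h2

end aux2

section aux3
variable {K : Type*} [Field K] (q : K)

lemma qbin_div (hq : q ≠ 0) (hpoch : ∀ n : ℕ, qPoch (q ^ 2) (q ^ 2) n ≠ 0) (y : K) (n : ℕ) :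
    qPoch y (q^2) n / qPoch (q^2) (q^2) n = ∑ α ∈ Finset.range (n+1),
      (-y * q⁻¹) ^ α * q ^ (α^2) / (qPoch (q^2) (q^2) α * qPoch (q^2) (q^2) (n - α)) := by
  rw [qbin q hq hpoch y n, Finset.sum_div]
  refine Finset.sum_congr rfl fun α _ => ?_
  rw [mul_div_assoc, div_div,
    mul_comm (qPoch (q^2) (q^2) α * qPoch (q^2) (q^2) (n - α)) (qPoch (q^2) (q^2) n),
    ← div_div, div_self (hpoch n), ← mul_div_assoc, mul_one]

lemma qPoch_prod : ∀ (m : ℕ) (d : Fin m → ℕ) (x : K),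
    qPoch x (q^2) (∑ i, d i)
      = ∏ i, qPoch (x * (q^2) ^ (∑ l ∈ Finset.univ.filter (fun l => l < i), d l)) (q^2) (d i) := by
  intro m
  induction m with
  | zero => intro d x; simp [qPoch]
  | succ m ih =>
    intro d x
    rw [Fin.sum_univ_succ, qPoch_add, Fin.prod_univ_succ,
      ih (fun i => d i.succ) (x * (q^2) ^ (d 0))]
    congr 1
    · congr 1
      simp
    · refine Finset.prod_congr rfl fun i _ => ?_
      have hs : ∑ l ∈ Finset.univ.filter (fun l => l < i.succ), d l
          = d 0 + ∑ l ∈ Finset.univ.filter (fun l => l < i), d l.succ := by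
        rw [Finset.sum_filter, Finset.sum_filter, Fin.sum_univ_succ]
        simp [Fin.succ_lt_succ_iff, Fin.succ_pos]
      rw [hs, mul_assoc, ← pow_add]

end aux3


theorem stmt0 {K : Type*} [Field K] (q x : K) (hq : q ≠ 0)
    (hpoch : ∀ n : ℕ, qPoch (q ^ 2) (q ^ 2) n ≠ 0)
    (m : ℕ) (d : Fin m → ℕ) :
    qPoch (x ^ 2) (q ^ 2) (∑ i, d i) / ∏ i, qPoch (q ^ 2) (q ^ 2) (d i)
      = ∑ α : (i : Fin m) → Fin (d i + 1),
          (-(x ^ 2) * q⁻¹) ^ (∑ i, ((α i : ℕ))) *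
            q ^ ((∑ i, ((α i : ℕ)) ^ 2)
                + 2 * ∑ i, (α i : ℕ) * (∑ l ∈ Finset.univ.filter (fun l => l < i), d l)) /
          ((∏ i, qPoch (q ^ 2) (q ^ 2) ((α i : ℕ))) *
            ∏ i, qPoch (q ^ 2) (q ^ 2) (d i - (α i : ℕ))) := by
  classical
  rw [qPoch_prod q m d (x ^ 2), ← Finset.prod_div_distrib]
  have hfac : ∀ i : Fin m,
      qPoch (x ^ 2 * (q ^ 2) ^ (∑ l ∈ Finset.univ.filter (fun l => l < i), d l)) (q ^ 2) (d i)
        / qPoch (q ^ 2) (q ^ 2) (d i)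
      = ∑ α : Fin (d i + 1),
          (-(x ^ 2 * (q ^ 2) ^ (∑ l ∈ Finset.univ.filter (fun l => l < i), d l)) * q⁻¹) ^ (α : ℕ)
              * q ^ ((α : ℕ) ^ 2)
            / (qPoch (q ^ 2) (q ^ 2) (α : ℕ) * qPoch (q ^ 2) (q ^ 2) (d i - (α : ℕ))) := by
    intro i
    rw [qbin_div q hq hpoch _ (d i)]
    exact (Fin.sum_univ_eq_sum_range (fun α =>
      (-(x ^ 2 * (q ^ 2) ^ (∑ l ∈ Finset.univ.filter (fun l => l < i), d l)) * q⁻¹) ^ α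
          * q ^ (α ^ 2)
        / (qPoch (q ^ 2) (q ^ 2) α * qPoch (q ^ 2) (q ^ 2) (d i - α))) (d i + 1)).symm
  rw [Finset.prod_congr rfl (fun i _ => hfac i), Finset.prod_univ_sum, Fintype.piFinset_univ]
  refine Finset.sum_congr rfl fun a _ => ?_
  rw [Finset.prod_div_distrib]
  congr 1
  · -- numerators
    have hnum : ∀ i : Fin m,
        (-(x ^ 2 * (q ^ 2) ^ (∑ l ∈ Finset.univ.filter (fun l => l < i), d l)) * q⁻¹) ^ (a i : ℕ)
            * q ^ ((a i : ℕ) ^ 2)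
        = (-(x ^ 2) * q⁻¹) ^ (a i : ℕ)
            * q ^ ((a i : ℕ) ^ 2
              + 2 * ((a i : ℕ) * (∑ l ∈ Finset.univ.filter (fun l => l < i), d l))) := by
      intro i
      set s := ∑ l ∈ Finset.univ.filter (fun l => l < i), d l with hs
      have hb : ((q ^ 2) ^ s) ^ (a i : ℕ) = q ^ (2 * ((a i : ℕ) * s)) := by
        rw [← pow_mul, ← pow_mul]
        congr 1
        ring
      have hbase : -(x ^ 2 * (q ^ 2) ^ s) * q⁻¹ = (-(x ^ 2) * q⁻¹) * (q ^ 2) ^ s := by ring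
      rw [hbase, mul_pow, hb, pow_add]
      ring
    rw [Finset.prod_congr rfl (fun i _ => hnum i), Finset.prod_mul_distrib,
      Finset.prod_pow_eq_pow_sum, Finset.prod_pow_eq_pow_sum]
    congr 1
    rw [Finset.sum_add_distrib, ← Finset.mul_sum]
  · rw [Finset.prod_mul_distrib]
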